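/- Let n ≥ q ≥ 1 be integers, let v ∈ ℝⁿ have all entries positive, let X ∈ F_v, and let X⊥ be an n×(n−q) real matrix such that (X X⊥) is orthogonal. Let g : ℝ^{n×q} → ℝ be convex and Lipschitz continuous with constant L_g, let ξ ∈ ℝ^{n×q}, let μ > 0, define ℓ(η) = ⟨ξ, η⟩ + (1/(2μ))‖η‖_F² + g(X + η), and let Q be the orthogonal projection of ℝ^{n×q} (with the Frobenius inner product) onto the subspace N_X. Suppose w minimizes ℓ over the affine set {η ∈ ℝ^{n×q} : Qη = Qw}; set ε = Qw and v̂ = w − ε. Then g(X) ≥ ⟨ξ, v̂⟩ + (1/(2μ))‖v̂‖_F² + g(X + v̂) − (2 L_g + ‖ε‖_F/(2μ)) ‖ε‖_F. -/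

import Mathlib

open Matrix

/-- Let `g` be convex and Lipschitz with constant `L_g`, let `Q` be the
Frobenius-orthogonal projection onto `N_X`, and suppose `w` minimizes
`ℓ(η) = ⟨ξ, η⟩ + (1/(2μ))‖η‖_F² + g(X + η)` over `{η : Qη = Qw}`. With `ε = Qw` and
`v̂ = w − ε`, one has
`g(X) ≥ ⟨ξ, v̂⟩ + (1/(2μ))‖v̂‖_F² + g(X + v̂) − (2L_g + ‖ε‖_F/(2μ))‖ε‖_F`. -/
theorem stmt_14 (n q : ℕ) (hq : 1 ≤ q) (hnq : q ≤ n)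
    (v : Fin n → ℝ) (hv : ∀ i, 0 < v i)
    (X : Matrix (Fin n) (Fin q) ℝ)
    (hX : Xᵀ * X = 1 ∧ ∃ c : Fin q → ℝ, X *ᵥ c = v)
    (Xp : Matrix (Fin n) (Fin (n - q)) ℝ)
    (hO : (fromCols X Xp)ᵀ * fromCols X Xp = 1)
    (Nset : Set (Matrix (Fin n) (Fin q) ℝ))
    (hN : Nset = {U | ∃ (S : Matrix (Fin q) (Fin q) ℝ) (u : Fin (n - q) → ℝ),
      Sᵀ = S ∧ U = X * S + vecMulVec (Xp *ᵥ u) (v ᵥ* X)})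
    (g : Matrix (Fin n) (Fin q) ℝ → ℝ) (hg : ConvexOn ℝ Set.univ g)
    (Lg : ℝ)
    (hLip : ∀ U V : Matrix (Fin n) (Fin q) ℝ,
      |g U - g V| ≤ Lg * Real.sqrt (Matrix.trace ((U - V)ᵀ * (U - V))))
    (ξ : Matrix (Fin n) (Fin q) ℝ) (μ : ℝ) (hμ : 0 < μ)
    (l : Matrix (Fin n) (Fin q) ℝ → ℝ)
    (hl : l = fun η => Matrix.trace (ξᵀ * η) +
      (1 / (2 * μ)) * Matrix.trace (ηᵀ * η) + g (X + η))
    (Q : Matrix (Fin n) (Fin q) ℝ →ₗ[ℝ] Matrix (Fin n) (Fin q) ℝ)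
    (hQmem : ∀ z, Q z ∈ Nset)
    (hQid : ∀ z ∈ Nset, Q z = z)
    (hQorth : ∀ z, ∀ u ∈ Nset, Matrix.trace ((z - Q z)ᵀ * u) = 0)
    (w : Matrix (Fin n) (Fin q) ℝ)
    (hwmin : ∀ η : Matrix (Fin n) (Fin q) ℝ, Q η = Q w → l w ≤ l η)
    (ε vh : Matrix (Fin n) (Fin q) ℝ) (hε : ε = Q w) (hvh : vh = w - ε) :
    Matrix.trace (ξᵀ * vh) + (1 / (2 * μ)) * Matrix.trace (vhᵀ * vh) + g (X + vh) -
        (2 * Lg + Real.sqrt (Matrix.trace (εᵀ * ε)) / (2 * μ)) *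
          Real.sqrt (Matrix.trace (εᵀ * ε)) ≤
      g X := by
  have hεmem : ε ∈ Nset := hε ▸ hQmem w
  have hQε : Q ε = Q w := by rw [hε]; exact hQid _ (hQmem w)
  have hmin := hwmin ε hQε
  have horth : Matrix.trace (vhᵀ * ε) = 0 := by
    rw [hvh, hε]; exact hQorth w (Q w) (hQmem w)
  have horth' : Matrix.trace (εᵀ * vh) = 0 := by
    have := Matrix.trace_transpose (εᵀ * vh)
    simp only [Matrix.transpose_mul, Matrix.transpose_transpose] at this
    rw [← this, horth]
  have hw : w = vh + ε := by rw [hvh]; abel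
  have hnn : 0 ≤ Matrix.trace (εᵀ * ε) := by
    rw [Matrix.trace]
    apply Finset.sum_nonneg
    intro j _
    rw [Matrix.diag_apply, Matrix.mul_apply]
    apply Finset.sum_nonneg
    intro i _
    simp only [Matrix.transpose_apply]
    exact mul_self_nonneg _
  set s := Real.sqrt (Matrix.trace (εᵀ * ε)) with hs
  have hs2 : s ^ 2 = Matrix.trace (εᵀ * ε) := Real.sq_sqrt hnn
  have hsnn : 0 ≤ s := Real.sqrt_nonneg _
  have h1 : |g (X + ε) - g X| ≤ Lg * s := by
    have := hLip (X + ε) X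
    simpa using this
  have h2 : |g (X + vh) - g (X + w)| ≤ Lg * s := by
    have := hLip (X + vh) (X + w)
    have he : X + vh - (X + w) = -ε := by rw [hvh]; abel
    rw [he] at this
    simpa using this
  have htrw : Matrix.trace (wᵀ * w)
      = Matrix.trace (vhᵀ * vh) + Matrix.trace (εᵀ * ε) := by
    rw [hw]
    simp only [Matrix.transpose_add, Matrix.add_mul, Matrix.mul_add, Matrix.trace_add,
      horth, horth']
    ring
  have htrξ : Matrix.trace (ξᵀ * w)
      = Matrix.trace (ξᵀ * vh) + Matrix.trace (ξᵀ * ε) := by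
    rw [hw, Matrix.mul_add, Matrix.trace_add]
  rw [hl] at hmin
  simp only at hmin
  rw [htrw, htrξ] at hmin
  rw [mul_add] at hmin
  have habs1 := abs_le.mp h1
  have habs2 := abs_le.mp h2
  have hsq : 0 ≤ s / (2 * μ) * s := by positivity
  linarith [habs1.2, habs2.2, hmin, hsq]
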